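/- Let G = ℤ be the infinite cyclic group, viewed as the quotient of the free group F({a}) on one generator via a ↦ 1, with symmetric generating set S = {1, −1}. Then (i) c_0 = 1 and c_n = 0 for all n ≥ 1, so C = limsup c_n^{1/n} = 0 and R(n) = 0 for every n ≥ 1; and (ii) the function R′ associated to (ℤ, S) satisfies R′ ∼ n (R′ is asymptotically equivalent to the identity function). In particular, R and R′ are not asymptotically equivalent for the infinite cyclic group. -/

import Mathlib

/-- The cogrowth function of a group `G` with respect to a generating set `S`:
`cogrowth G S n` is the number of words of length `n` in the letters of `S`
whose product in `G` is the identity. -/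
noncomputable def cogrowth (G : Type*) [Group G] (S : Set G) (n : ℕ) : ℕ :=
  Nat.card {w : Fin n → S // (List.ofFn fun i => ((w i : G))).prod = 1}

/-- `D = limsup dₙ^{1/n}`, the asymptotic cogrowth rate. -/
noncomputable def cogrowthRate (G : Type*) [Group G] (S : Set G) : ℝ :=
  Filter.limsup (fun n : ℕ => (cogrowth G S n : ℝ) ^ ((n : ℝ)⁻¹)) Filter.atTop

/-- `R′(n) = min { k : d_{2k+2}/d_{2k} > D² − 1/n }`. -/
noncomputable def Rprime (G : Type*) [Group G] (S : Set G) (n : ℕ) : ℕ :=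
  sInf {k : ℕ |
    (cogrowth G S (2 * k + 2) : ℝ) / (cogrowth G S (2 * k) : ℝ) >
      (cogrowthRate G S) ^ 2 - 1 / (n : ℝ)}

/-- `f ≾ g`: there are constants `a, b > 0` with `f(n) ≤ a·g(⌈bn⌉)` for all
sufficiently large `n`. -/
def AsympLE (f g : ℕ → ℝ) : Prop :=
  ∃ a b : ℝ, 0 < a ∧ 0 < b ∧ ∀ᶠ n : ℕ in Filter.atTop, f n ≤ a * g ⌈b * (n : ℝ)⌉₊

/-- `f ∼ g`: `f ≾ g` and `g ≾ f`. -/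
def AsympEquiv (f g : ℕ → ℝ) : Prop :=
  AsympLE f g ∧ AsympLE g f

/-- The reduced-cogrowth function of a group presented as a quotient
`φ : FreeGroup X →* G`: the number of elements of the free group of reduced
word length `n` that map to the identity of `G`. -/
noncomputable def redCogrowth {X : Type*} [DecidableEq X] {G : Type*} [Group G]
    (φ : FreeGroup X →* G) (n : ℕ) : ℕ :=
  Nat.card {w : FreeGroup X // (FreeGroup.toWord w).length = n ∧ φ w = 1}

/-- `C = limsup cₙ^{1/n}`, the asymptotic reduced-cogrowth rate. -/
noncomputable def redCogrowthRate {X : Type*} [DecidableEq X] {G : Type*} [Group G]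
    (φ : FreeGroup X →* G) : ℝ :=
  Filter.limsup (fun n : ℕ => (redCogrowth φ n : ℝ) ^ ((n : ℝ)⁻¹)) Filter.atTop

/-- `R(n) = min { k : c_{2k+2}/c_{2k} > C² − 1/n }`. -/
noncomputable def RR {X : Type*} [DecidableEq X] {G : Type*} [Group G]
    (φ : FreeGroup X →* G) (n : ℕ) : ℕ :=
  sInf {k : ℕ |
    (redCogrowth φ (2 * k + 2) : ℝ) / (redCogrowth φ (2 * k) : ℝ) >
      (redCogrowthRate φ) ^ 2 - 1 / (n : ℝ)}

/-- The quotient map realizing `ℤ` as a quotient of the free group on one generator,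
sending the generator to `1 ∈ ℤ`. -/
noncomputable def intQuot : FreeGroup Unit →* Multiplicative ℤ :=
  FreeGroup.lift fun _ => Multiplicative.ofAdd (1 : ℤ)

/-- The standard symmetric generating set `{1, −1}` of `ℤ`. -/
def intGens : Set (Multiplicative ℤ) :=
  {Multiplicative.ofAdd (1 : ℤ), Multiplicative.ofAdd (-1 : ℤ)}

open Filter Multiplicative Finset Topology

lemma mem_intGens_iff {s : Multiplicative ℤ} : s ∈ intGens ↔ s = ofAdd 1 ∨ s = ofAdd (-1) := by
  simp [intGens]

lemma prod_eq_one_iff {n : ℕ} (w : Fin n → ↥intGens) :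
    (List.ofFn fun i => ((w i : Multiplicative ℤ))).prod = 1 ↔
      2 * (Finset.univ.filter fun i => (w i : Multiplicative ℤ) = ofAdd 1).card = n := by
  classical
  set s := Finset.univ.filter fun i => (w i : Multiplicative ℤ) = ofAdd 1 with hs
  have hcard : s.card ≤ n := by simpa using Finset.card_filter_le Finset.univ (fun i => (w i : Multiplicative ℤ) = ofAdd 1)
  have hsum : ∑ i, toAdd (w i : Multiplicative ℤ) = (s.card : ℤ) - ((n : ℤ) - s.card) := by
    rw [← Finset.sum_filter_add_sum_filter_not Finset.univ
      (fun i => (w i : Multiplicative ℤ) = ofAdd 1)]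
    have h1 : ∑ i ∈ s, toAdd (w i : Multiplicative ℤ) = (s.card : ℤ) := by
      rw [Finset.sum_congr rfl (fun i hi => ?_), Finset.sum_const, nsmul_eq_mul, mul_one]
      · rw [hs, Finset.mem_filter] at hi
        rw [hi.2]; rfl
    have h2 : ∑ i ∈ Finset.univ.filter (fun i => ¬ (w i : Multiplicative ℤ) = ofAdd 1),
        toAdd (w i : Multiplicative ℤ)
        = -(((Finset.univ.filter (fun i => ¬ (w i : Multiplicative ℤ) = ofAdd 1)).card : ℤ)) := by
      rw [Finset.sum_congr rfl (fun i hi => ?_), Finset.sum_const, nsmul_eq_mul, mul_neg, mul_one]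
      · rw [Finset.mem_filter] at hi
        have := (mem_intGens_iff.mp (w i).2).resolve_left hi.2
        rw [this]; rfl
    have h3 : s.card + (Finset.univ.filter (fun i => ¬ (w i : Multiplicative ℤ) = ofAdd 1)).card
        = n := by
      rw [hs]
      simpa using Finset.card_filter_add_card_filter_not
        (s := (Finset.univ : Finset (Fin n))) (p := fun i => (w i : Multiplicative ℤ) = ofAdd 1)
    rw [h1, h2]
    have : ((Finset.univ.filter (fun i => ¬ (w i : Multiplicative ℤ) = ofAdd 1)).card : ℤ)
        = (n : ℤ) - s.card := by omega
    rw [this]; ring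
  rw [List.prod_ofFn]
  constructor
  · intro h
    have h0 : ∑ i, toAdd (w i : Multiplicative ℤ) = 0 := by
      rw [← toAdd_prod, h]; rfl
    rw [hsum] at h0
    omega
  · intro h
    have h0 : ∑ i, toAdd (w i : Multiplicative ℤ) = 0 := by rw [hsum]; omega
    have : toAdd (∏ i, (w i : Multiplicative ℤ)) = 0 := by rw [toAdd_prod]; exact h0
    exact toAdd.injective this

lemma ofAdd_one_ne : (ofAdd (1:ℤ)) ≠ ofAdd (-1) := by decide

lemma ofAdd_inv_ne : ¬ ((ofAdd (1:ℤ))⁻¹ = ofAdd 1) := by decide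

noncomputable def countEquiv (n : ℕ) :
    {w : Fin n → ↥intGens // (List.ofFn fun i => ((w i : Multiplicative ℤ))).prod = 1} ≃
      {s : Finset (Fin n) // 2 * s.card = n} := by
  classical
  have filt : ∀ s : Finset (Fin n),
      (Finset.univ.filter fun i =>
        (((if i ∈ s then (⟨ofAdd 1, Or.inl rfl⟩ : ↥intGens) else ⟨ofAdd (-1), Or.inr rfl⟩) :
          ↥intGens) : Multiplicative ℤ) = ofAdd 1) = s := by
    intro s
    ext i
    simp only [Finset.mem_filter, Finset.mem_univ, true_and]
    by_cases h : i ∈ s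
    · simp only [if_pos h]
      simp [h]
    · simp only [if_neg h]
      constructor
      · intro hh; exact absurd hh.symm ofAdd_one_ne
      · intro hh; exact absurd hh h
  exact
  { toFun := fun w => ⟨Finset.univ.filter fun i => (w.1 i : Multiplicative ℤ) = ofAdd 1,
      (prod_eq_one_iff w.1).mp w.2⟩
    invFun := fun s => ⟨fun i => if i ∈ s.1 then ⟨ofAdd 1, Or.inl rfl⟩ else ⟨ofAdd (-1), Or.inr rfl⟩,
      by rw [prod_eq_one_iff, filt s.1, s.2]⟩
    left_inv := by
      intro w
      apply Subtype.ext
      funext i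
      apply Subtype.ext
      rcases mem_intGens_iff.mp (w.1 i).2 with h | h
      · show (if i ∈ _ then _ else _ : ↥intGens).1 = _
        rw [if_pos (Finset.mem_filter.mpr ⟨Finset.mem_univ i, h⟩)]
        exact h.symm
      · have hnm : i ∉ Finset.univ.filter (fun j => (w.1 j : Multiplicative ℤ) = ofAdd 1) := by
          simp only [Finset.mem_filter, Finset.mem_univ, true_and]
          intro hh
          rw [h] at hh
          exact ofAdd_one_ne hh.symm
        show (if i ∈ _ then _ else _ : ↥intGens).1 = _
        rw [if_neg hnm]
        exact h.symm
    right_inv := by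
      intro s
      apply Subtype.ext
      exact filt s.1 }

lemma cogrowth_int_even (k : ℕ) :
    cogrowth (Multiplicative ℤ) intGens (2 * k) = Nat.centralBinom k := by
  classical
  rw [cogrowth, Nat.card_congr (countEquiv (2 * k))]
  have e2 : {s : Finset (Fin (2*k)) // 2 * s.card = 2*k} ≃ {s : Finset (Fin (2*k)) // s.card = k} :=
    Equiv.subtypeEquivRight (fun s => by omega)
  rw [Nat.card_congr e2, Nat.card_eq_fintype_card, Fintype.card_finset_len,
    Fintype.card_fin, Nat.centralBinom]

lemma cogrowth_int_odd (k : ℕ) :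
    cogrowth (Multiplicative ℤ) intGens (2 * k + 1) = 0 := by
  classical
  rw [cogrowth, Nat.card_congr (countEquiv (2 * k + 1))]
  have : IsEmpty {s : Finset (Fin (2*k+1)) // 2 * s.card = 2*k+1} :=
    ⟨fun s => by omega⟩
  exact Nat.card_of_isEmpty

/-! ### Injectivity of intQuot and reduced cogrowth -/

lemma intQuot_retract : ∀ w : FreeGroup Unit,
    zpowersHom (FreeGroup Unit) (FreeGroup.of ()) (intQuot w) = w := by
  intro w
  have h : (zpowersHom (FreeGroup Unit) (FreeGroup.of ())).comp intQuot
      = MonoidHom.id (FreeGroup Unit) := by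
    apply FreeGroup.ext_hom
    intro x
    simp [intQuot, zpowersHom_apply]
  exact DFunLike.congr_fun h w

lemma intQuot_injective : Function.Injective intQuot := by
  intro a b hab
  rw [← intQuot_retract a, ← intQuot_retract b, hab]

lemma redCogrowth_zero : redCogrowth intQuot 0 = 1 := by
  rw [redCogrowth]
  have h : ∀ w : FreeGroup Unit, ((FreeGroup.toWord w).length = 0 ∧ intQuot w = 1) ↔ w = 1 := by
    intro w
    constructor
    · rintro ⟨h, -⟩
      exact FreeGroup.toWord_eq_nil_iff.mp (List.length_eq_zero_iff.mp h)
    · rintro rfl; simp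
  rw [Nat.card_congr (Equiv.subtypeEquivRight h)]
  haveI : Unique {w : FreeGroup Unit // w = 1} :=
    ⟨⟨⟨1, rfl⟩⟩, by rintro ⟨w, rfl⟩; rfl⟩
  exact Nat.card_unique

lemma redCogrowth_pos (n : ℕ) (hn : 1 ≤ n) : redCogrowth intQuot n = 0 := by
  rw [redCogrowth]
  haveI : IsEmpty {w : FreeGroup Unit // (FreeGroup.toWord w).length = n ∧ intQuot w = 1} := by
    constructor
    rintro ⟨w, hw, hw1⟩
    have : w = 1 := intQuot_injective (by rw [hw1, map_one])
    rw [this] at hw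
    simp at hw
    omega
  exact Nat.card_of_isEmpty

lemma redRate : redCogrowthRate intQuot = 0 := by
  rw [redCogrowthRate, Filter.limsup_eq]
  have hset : {a : ℝ | ∀ᶠ n : ℕ in Filter.atTop,
      (redCogrowth intQuot n : ℝ) ^ ((n : ℝ)⁻¹) ≤ a} = Set.Ici 0 := by
    have hu : ∀ n : ℕ, 1 ≤ n → (redCogrowth intQuot n : ℝ) ^ ((n : ℝ)⁻¹) = 0 := by
      intro n hn
      rw [redCogrowth_pos n hn, Nat.cast_zero, Real.zero_rpow]
      positivity
    ext a
    simp only [Set.mem_setOf_eq, Set.mem_Ici]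
    constructor
    · intro ha
      rcases ((Filter.eventually_ge_atTop 1).and ha).exists with ⟨n, hn1, hn2⟩
      rw [hu n hn1] at hn2
      exact hn2
    · intro ha
      filter_upwards [Filter.eventually_ge_atTop 1] with n hn
      rw [hu n hn]
      exact ha
  rw [hset, csInf_Ici]

lemma RR_int (n : ℕ) (hn : 1 ≤ n) : RR intQuot n = 0 := by
  rw [RR]
  apply Nat.sInf_eq_zero.mpr
  left
  show (redCogrowth intQuot (2 * 0 + 2) : ℝ) / (redCogrowth intQuot (2 * 0) : ℝ) >
    (redCogrowthRate intQuot) ^ 2 - 1 / (n : ℝ)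
  rw [redRate, redCogrowth_pos 2 (by norm_num)]
  have : (0 : ℝ) < 1 / (n : ℝ) := by positivity
  simp
  positivity

/-! ### Cogrowth rate of ℤ is 2 -/

lemma centralBinom_le_four_pow (k : ℕ) : Nat.centralBinom k ≤ 4 ^ k := by
  have h := Nat.sum_range_choose (2 * k)
  have hk : k ∈ Finset.range (2 * k + 1) := by
    rw [Finset.mem_range]; omega
  calc Nat.centralBinom k = (2 * k).choose k := rfl
    _ ≤ ∑ m ∈ Finset.range (2 * k + 1), (2 * k).choose m :=
        Finset.single_le_sum (fun m _ => Nat.zero_le _) hk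
    _ = 2 ^ (2 * k) := h
    _ = 4 ^ k := by rw [pow_mul]; norm_num

lemma u_even (k : ℕ) : (cogrowth (Multiplicative ℤ) intGens (2 * k) : ℝ) ^ (((2 * k : ℕ) : ℝ)⁻¹)
    = (Nat.centralBinom k : ℝ) ^ (((2 * k : ℕ) : ℝ)⁻¹) := by
  rw [cogrowth_int_even]

lemma two_eq_four_pow_rpow (k : ℕ) (hk : 1 ≤ k) :
    ((4 ^ k : ℕ) : ℝ) ^ (((2 * k : ℕ) : ℝ)⁻¹) = 2 := by
  have h4 : ((4 ^ k : ℕ) : ℝ) = (2 : ℝ) ^ ((2 * k : ℕ) : ℝ) := by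
    rw [Real.rpow_natCast]
    push_cast
    rw [pow_mul]
    norm_num
  rw [h4, ← Real.rpow_mul (by norm_num : (0:ℝ) ≤ 2),
    mul_inv_cancel₀ (by positivity : ((2 * k : ℕ) : ℝ) ≠ 0), Real.rpow_one]

lemma u_le_two (n : ℕ) :
    (cogrowth (Multiplicative ℤ) intGens n : ℝ) ^ (((n : ℕ) : ℝ)⁻¹) ≤ 2 := by
  rcases Nat.even_or_odd n with ⟨k, hk⟩ | ⟨k, hk⟩
  · subst hk
    rcases Nat.eq_zero_or_pos k with rfl | hkpos
    · norm_num
    · rw [show k + k = 2 * k by ring, u_even]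
      calc (Nat.centralBinom k : ℝ) ^ (((2 * k : ℕ) : ℝ)⁻¹)
          ≤ ((4 ^ k : ℕ) : ℝ) ^ (((2 * k : ℕ) : ℝ)⁻¹) := by
            apply Real.rpow_le_rpow (by positivity)
            · exact_mod_cast centralBinom_le_four_pow k
            · positivity
        _ = 2 := two_eq_four_pow_rpow k hkpos
  · subst hk
    rw [cogrowth_int_odd, Nat.cast_zero, Real.zero_rpow (by positivity)]
    norm_num

lemma tendsto_u_even :
    Filter.Tendsto (fun k : ℕ =>
      (cogrowth (Multiplicative ℤ) intGens (2 * k) : ℝ) ^ (((2 * k : ℕ) : ℝ)⁻¹))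
      Filter.atTop (𝓝 2) := by
  have hmono : Filter.Tendsto (fun k : ℕ => 2 * k) Filter.atTop Filter.atTop :=
    Filter.tendsto_atTop_atTop_of_monotone (fun a b h => Nat.mul_le_mul_left 2 h)
      (fun b => ⟨b, by omega⟩)
  have hcast : Filter.Tendsto (fun k : ℕ => ((2 * k : ℕ) : ℝ)) Filter.atTop Filter.atTop :=
    tendsto_natCast_atTop_atTop.comp hmono
  have hd : Filter.Tendsto (fun k : ℕ => ((2 * k : ℕ) : ℝ) ^ (((2 * k : ℕ) : ℝ)⁻¹))
      Filter.atTop (𝓝 1) := by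
    have := tendsto_rpow_div.comp hcast
    simpa only [one_div, Function.comp_def] using this
  have hg : Filter.Tendsto (fun k : ℕ => 2 / (((2 * k : ℕ) : ℝ) ^ (((2 * k : ℕ) : ℝ)⁻¹)))
      Filter.atTop (𝓝 2) := by
    have := Filter.Tendsto.div (tendsto_const_nhds (x := (2:ℝ))) hd one_ne_zero
    simpa [Pi.div_def] using this
  apply tendsto_of_tendsto_of_tendsto_of_le_of_le' hg tendsto_const_nhds
  · filter_upwards [Filter.eventually_ge_atTop 1] with k hk
    rw [u_even]
    have hpos : (0:ℝ) < ((2 * k : ℕ) : ℝ) := by positivity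
    have hlow : ((4 ^ k : ℕ) : ℝ) / ((2 * k : ℕ) : ℝ) ≤ (Nat.centralBinom k : ℝ) := by
      rw [div_le_iff₀ hpos]
      have := Nat.four_pow_le_two_mul_self_mul_centralBinom k hk
      calc ((4 ^ k : ℕ) : ℝ) ≤ ((2 * k * Nat.centralBinom k : ℕ) : ℝ) := by exact_mod_cast this
        _ = (Nat.centralBinom k : ℝ) * ((2 * k : ℕ) : ℝ) := by push_cast; ring
    calc 2 / (((2 * k : ℕ) : ℝ) ^ (((2 * k : ℕ) : ℝ)⁻¹))
        = (((4 ^ k : ℕ) : ℝ) / ((2 * k : ℕ) : ℝ)) ^ (((2 * k : ℕ) : ℝ)⁻¹) := by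
          rw [Real.div_rpow (by positivity) (le_of_lt hpos), two_eq_four_pow_rpow k hk]
      _ ≤ (Nat.centralBinom k : ℝ) ^ (((2 * k : ℕ) : ℝ)⁻¹) := by
          apply Real.rpow_le_rpow (by positivity) hlow (by positivity)
  · filter_upwards with k
    exact u_le_two (2 * k)

lemma rate_int : cogrowthRate (Multiplicative ℤ) intGens = 2 := by
  rw [cogrowthRate, Filter.limsup_eq]
  have hset : {a : ℝ | ∀ᶠ n : ℕ in Filter.atTop,
      (cogrowth (Multiplicative ℤ) intGens n : ℝ) ^ ((n : ℝ)⁻¹) ≤ a} = Set.Ici 2 := by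
    ext a
    simp only [Set.mem_setOf_eq, Set.mem_Ici]
    constructor
    · intro ha
      have hmono : Filter.Tendsto (fun k : ℕ => 2 * k) Filter.atTop Filter.atTop :=
        Filter.tendsto_atTop_atTop_of_monotone (fun a b h => Nat.mul_le_mul_left 2 h)
          (fun b => ⟨b, by omega⟩)
      have h2 : ∀ᶠ k : ℕ in Filter.atTop,
          (cogrowth (Multiplicative ℤ) intGens (2 * k) : ℝ) ^ (((2 * k : ℕ) : ℝ)⁻¹) ≤ a :=
        hmono.eventually ha
      exact le_of_tendsto tendsto_u_even h2
    · intro ha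
      filter_upwards with n
      exact (u_le_two n).trans ha
  rw [hset, csInf_Ici]

lemma ratio_eq (k : ℕ) :
    (Nat.centralBinom (k + 1) : ℝ) / (Nat.centralBinom k : ℝ)
      = (2 * (2 * (k : ℝ) + 1)) / ((k : ℝ) + 1) := by
  have hid := Nat.succ_mul_centralBinom_succ k
  have hidR : ((k : ℝ) + 1) * (Nat.centralBinom (k + 1) : ℝ)
      = 2 * (2 * (k : ℝ) + 1) * (Nat.centralBinom k : ℝ) := by
    exact_mod_cast congrArg (fun m : ℕ => (m : ℝ)) hid
  have hb : (0:ℝ) < (Nat.centralBinom k : ℝ) := by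
    exact_mod_cast Nat.centralBinom_pos k
  have hk1 : (0:ℝ) < (k : ℝ) + 1 := by positivity
  rw [div_eq_div_iff hb.ne' hk1.ne']
  linarith [hidR]

lemma Rprime_int (n : ℕ) (hn : 1 ≤ n) : Rprime (Multiplicative ℤ) intGens n = 2 * n := by
  rw [Rprime, rate_int]
  have hn' : (0:ℝ) < (n : ℝ) := by exact_mod_cast hn
  have hset : {k : ℕ |
      (cogrowth (Multiplicative ℤ) intGens (2 * k + 2) : ℝ) /
        (cogrowth (Multiplicative ℤ) intGens (2 * k) : ℝ) > (2:ℝ) ^ 2 - 1 / (n : ℝ)}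
      = Set.Ici (2 * n) := by
    ext k
    have hk1 : (0:ℝ) < (k : ℝ) + 1 := by positivity
    have h1 : cogrowth (Multiplicative ℤ) intGens (2 * k + 2)
        = Nat.centralBinom (k + 1) := by
      rw [show 2 * k + 2 = 2 * (k + 1) by ring, cogrowth_int_even]
    simp only [Set.mem_setOf_eq, Set.mem_Ici, h1, cogrowth_int_even, gt_iff_lt]
    rw [ratio_eq k]
    rw [show (2:ℝ)^2 - 1/(n:ℝ) = 4 - 1/(n:ℝ) by norm_num]
    rw [lt_div_iff₀ hk1]
    have hmul : (0:ℝ) < (n:ℝ) := hn'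
    constructor
    · intro h
      have h2 : 2 * (n:ℝ) < (k:ℝ) + 1 := by
        have hinv : (1 / (n:ℝ)) * (n:ℝ) = 1 := by field_simp
        nlinarith [h, hinv, hmul, hk1]
      have : 2 * n < k + 1 := by exact_mod_cast h2
      omega
    · intro h
      have h2 : 2 * (n:ℝ) ≤ (k:ℝ) := by exact_mod_cast h
      have hinv : (1 / (n:ℝ)) * (n:ℝ) = 1 := by field_simp
      nlinarith [h2, hinv, hmul, hk1]
  rw [hset, csInf_Ici]

/-- For the infinite cyclic group `ℤ`: (i) `c₀ = 1`, `cₙ = 0` for `n ≥ 1`, so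
`C = limsup cₙ^{1/n} = 0` and `R(n) = 0` for all `n ≥ 1`; (ii) `R′ ∼ n`.
In particular `R` and `R′` are not asymptotically equivalent. -/
theorem int_R_and_Rprime :
    redCogrowth intQuot 0 = 1 ∧
    (∀ n : ℕ, 1 ≤ n → redCogrowth intQuot n = 0) ∧
    redCogrowthRate intQuot = 0 ∧
    (∀ n : ℕ, 1 ≤ n → RR intQuot n = 0) ∧
    AsympEquiv (fun n : ℕ => (Rprime (Multiplicative ℤ) intGens n : ℝ))
      (fun n : ℕ => (n : ℝ)) ∧
    ¬ AsympEquiv (fun n : ℕ => (RR intQuot n : ℝ))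
      (fun n : ℕ => (Rprime (Multiplicative ℤ) intGens n : ℝ)) := by
  refine ⟨redCogrowth_zero, redCogrowth_pos, redRate, RR_int, ⟨?_, ?_⟩, ?_⟩
  · refine ⟨2, 1, by norm_num, by norm_num, ?_⟩
    filter_upwards [Filter.eventually_ge_atTop 1] with n hn
    simp only [one_mul, Nat.ceil_natCast]
    rw [Rprime_int n hn]
    push_cast
    linarith
  · refine ⟨1, 1, by norm_num, by norm_num, ?_⟩
    filter_upwards [Filter.eventually_ge_atTop 1] with n hn
    simp only [one_mul, Nat.ceil_natCast]
    rw [Rprime_int n hn]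
    push_cast
    have : (1:ℝ) ≤ (n:ℝ) := by exact_mod_cast hn
    linarith
  · rintro ⟨-, a, b, ha, hb, hev⟩
    rcases (hev.and (Filter.eventually_ge_atTop 1)).exists with ⟨n, hle, hn1⟩
    have hnR : (1:ℝ) ≤ (n:ℝ) := by exact_mod_cast hn1
    have hceil : 1 ≤ ⌈b * (n:ℝ)⌉₊ := Nat.ceil_pos.mpr (by positivity)
    have hle' : (Rprime (Multiplicative ℤ) intGens n : ℝ)
        ≤ a * (RR intQuot ⌈b * (n:ℝ)⌉₊ : ℝ) := hle
    rw [RR_int _ hceil, Rprime_int n hn1] at hle'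
    push_cast at hle'
    nlinarith [hle', hnR]
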